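/- Let q(u0, u1, u2, u3, u4) = (u0 u3 + u0 u4 + u1 u4 + u1 u2 + u2 u4 + u3 u4 + u4^2)^2 - 4 u0 u1 u2 u3. Then q is a homogeneous polynomial of degree 4 in u0,...,u4, and q is irreducible over C. -/

import Mathlib

open MvPolynomial

noncomputable section
abbrev Rr := MvPolynomial (Fin 4) ℂ
lemma primeX4 (i : Fin 4) : Prime (X i : MvPolynomial (Fin 4) ℂ) := by
  have h0 : Prime (X 0 : MvPolynomial (Fin 4) ℂ) := by
    rw [← MulEquiv.prime_iff (finSuccEquiv ℂ 3).toMulEquiv]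
    show Prime ((finSuccEquiv ℂ 3) (X 0))
    rw [finSuccEquiv_X_zero]
    exact Polynomial.prime_X
  rw [← MulEquiv.prime_iff (renameEquiv ℂ (Equiv.swap (0 : Fin 4) i)).toMulEquiv] at h0
  simpa using h0

lemma notXdvd {f : MvPolynomial (Fin 4) ℂ} {i : Fin 4} {w : Fin 4 → ℂ}
    (h0 : w i = 0) (h1 : eval w f ≠ 0) : ¬ (X i ∣ f) := by
  rintro ⟨g, rfl⟩
  apply h1
  simp [h0]

def yS0 : Rr := X 0 * X 1 + X 0 * X 3 + X 1 * X 3 + X 2 * X 3 + X 3 ^ 2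
def pA : Rr := (X 2 + X 3) ^ 2
def pB : Rr := 2 * (X 2 + X 3) * yS0 - 4 * (X 0 * X 1 * X 2)
def pC : Rr := yS0 ^ 2
def gG : Rr := X 0 * X 1 + X 0 * X 2 + X 0 * X 3 + X 1 * X 2 + X 1 * X 3
  + X 2 ^ 2 + 2 * (X 2 * X 3) + X 3 ^ 2

lemma keyring : pB ^ 2 - 4 * (pA * pC) = -(16 * (X 0 * X 1 * X 2 * X 3 * gG)) := by
  unfold pA pB pC yS0 gG; ring

lemma hq :
    (finSuccEquiv ℂ 4)
      ((X 0 * X 3 + X 0 * X 4 + X 1 * X 4 + X 1 * X 2 + X 2 * X 4 + X 3 * X 4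
        + X 4 ^ 2) ^ 2 - 4 * (X 0 * X 1 * X 2 * X 3) : MvPolynomial (Fin 5) ℂ)
    = Polynomial.C pA * Polynomial.X ^ 2 + Polynomial.C pB * Polynomial.X + Polynomial.C pC := by
  have e1 : (X 1 : MvPolynomial (Fin 5) ℂ) = X (Fin.succ 0) := rfl
  have e2 : (X 2 : MvPolynomial (Fin 5) ℂ) = X (Fin.succ 1) := rfl
  have e3 : (X 3 : MvPolynomial (Fin 5) ℂ) = X (Fin.succ 2) := rfl
  have e4 : (X 4 : MvPolynomial (Fin 5) ℂ) = X (Fin.succ 3) := rfl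
  rw [e1, e2, e3, e4]
  unfold pA pB pC yS0
  simp only [map_sub, map_add, map_mul, map_pow, map_ofNat, finSuccEquiv_X_zero,
    finSuccEquiv_X_succ, Polynomial.C_add, Polynomial.C_mul, Polynomial.C_pow]
  ring
end

section
open Polynomial in
lemma coeffs :
    (Polynomial.C pA * Polynomial.X ^ 2 + Polynomial.C pB * Polynomial.X + Polynomial.C pC).coeff 2 = pA ∧
    (Polynomial.C pA * Polynomial.X ^ 2 + Polynomial.C pB * Polynomial.X + Polynomial.C pC).coeff 1 = pB := by
  constructor <;>
  simp [Polynomial.coeff_add, Polynomial.coeff_C_mul, Polynomial.coeff_X_pow, Polynomial.coeff_C,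
    Polynomial.coeff_X]
end

lemma pAne : pA ≠ 0 := by
  intro h
  have := congrArg (eval (fun k : Fin 4 => if k = 2 then (1:ℂ) else 0)) h
  simp [pA] at this

lemma evalG : eval (fun k : Fin 4 => if k = 2 then (1:ℂ) else 0) gG = 1 := by
  simp [gG]

lemma hXdvdsum {i : Fin 4} (hi : i = 0 ∨ i = 1 ∨ i = 2) : ¬ ((X i : Rr) ∣ X 2 + X 3) := by
  rcases hi with rfl | rfl | rfl
  · exact notXdvd (w := fun k => if k = 3 then 1 else 0) (by simp) (by simp)
  · exact notXdvd (w := fun k => if k = 3 then 1 else 0) (by simp) (by simp)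
  · exact notXdvd (w := fun k => if k = 3 then 1 else 0) (by simp) (by simp)

lemma hprim : (Polynomial.C pA * Polynomial.X ^ 2 + Polynomial.C pB * Polynomial.X
    + Polynomial.C pC).IsPrimitive := by
  intro r hr
  by_contra hu
  obtain ⟨g, hg⟩ := hr
  have h2 : pA = r * g.coeff 2 := by
    rw [← coeffs.1, hg, Polynomial.coeff_C_mul]
  have h1 : pB = r * g.coeff 1 := by
    rw [← coeffs.2, hg, Polynomial.coeff_C_mul]
  have hr0 : r ≠ 0 := by rintro rfl; simp at h2; exact pAne h2
  obtain ⟨p, hpirr, hpr⟩ := WfDvdMonoid.exists_irreducible_factor hu hr0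
  have hp : Prime p := UniqueFactorizationMonoid.irreducible_iff_prime.mp hpirr
  have hpA : p ∣ pA := hpr.trans ⟨g.coeff 2, h2⟩
  have hpB : p ∣ pB := hpr.trans ⟨g.coeff 1, h1⟩
  have h23 : p ∣ (X 2 + X 3 : Rr) := hp.dvd_of_dvd_pow (by unfold pA at hpA; exact hpA)
  have hprod : p ∣ (X 0 * X 1 * X 2 : Rr) := by
    have h4 : p ∣ (4 : Rr) * (X 0 * X 1 * X 2) := by
      have he : (4 : Rr) * (X 0 * X 1 * X 2) = 2 * (X 2 + X 3) * yS0 - pB := by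
        unfold pB; ring
      rw [he]
      exact dvd_sub ((h23.mul_left 2).mul_right yS0) hpB
    have hu4 : IsUnit (4 : Rr) := by
      rw [← map_ofNat (C : ℂ →+* Rr) 4]
      exact (isUnit_iff_ne_zero.mpr (by norm_num)).map C
    exact (hu4.dvd_mul_left).mp h4
  have contra : ∀ i : Fin 4, i = 0 ∨ i = 1 ∨ i = 2 → p ∣ (X i : Rr) → False := by
    intro i hi hpi
    exact hXdvdsum hi (((hp.associated_of_dvd (primeX4 i) hpi).symm.dvd).trans h23)
  rcases hp.2.2 _ _ hprod with h | h
  · rcases hp.2.2 _ _ h with h' | h'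
    · exact contra 0 (by norm_num) h'
    · exact contra 1 (by norm_num) h'
  · exact contra 2 (by norm_num) h

lemma notX0dvd : ∀ f : Rr, (f = X 1 ∨ f = X 2 ∨ f = X 3 ∨ f = gG) → ¬ ((X 0 : Rr) ∣ f) := by
  rintro f (rfl | rfl | rfl | rfl)
  · exact notXdvd (w := fun k => if k = 1 then 1 else 0) (by simp) (by simp)
  · exact notXdvd (w := fun k => if k = 2 then 1 else 0) (by simp) (by simp)
  · exact notXdvd (w := fun k => if k = 3 then 1 else 0) (by simp) (by simp)
  · exact notXdvd (w := fun k => if k = 2 then 1 else 0) (by simp) (by rw [evalG]; norm_num)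

lemma irred_map (K : Type) [Field K] [Algebra Rr K] [IsFractionRing Rr K] :
    Irreducible ((Polynomial.C pA * Polynomial.X ^ 2 + Polynomial.C pB * Polynomial.X
      + Polynomial.C pC).map (algebraMap Rr K)) := by
  set φ := algebraMap Rr K with hφ
  have hinj : Function.Injective φ := IsFractionRing.injective Rr K
  have hmap : (Polynomial.C pA * Polynomial.X ^ 2 + Polynomial.C pB * Polynomial.X
      + Polynomial.C pC).map φ
      = Polynomial.C (φ pA) * Polynomial.X ^ 2 + Polynomial.C (φ pB) * Polynomial.X
        + Polynomial.C (φ pC) := by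
    simp [Polynomial.map_add, Polynomial.map_mul, Polynomial.map_pow]
  rw [hmap]
  have hA0 : φ pA ≠ 0 := fun h => pAne (hinj (by simpa using h))
  have hdeg : (Polynomial.C (φ pA) * Polynomial.X ^ 2 + Polynomial.C (φ pB) * Polynomial.X
      + Polynomial.C (φ pC)).natDegree = 2 := Polynomial.natDegree_quadratic hA0
  have hne : (Polynomial.C (φ pA) * Polynomial.X ^ 2 + Polynomial.C (φ pB) * Polynomial.X
      + Polynomial.C (φ pC)) ≠ 0 := fun h => by rw [h] at hdeg; simp at hdeg
  rw [Polynomial.irreducible_iff_roots_eq_zero_of_degree_le_three (by omega) (by omega)]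
  by_contra hroots
  obtain ⟨z, hz⟩ := Multiset.exists_mem_of_ne_zero hroots
  have heval : φ pA * z ^ 2 + φ pB * z + φ pC = 0 := by
    have := ((Polynomial.mem_roots hne).mp hz)
    simpa [Polynomial.IsRoot, Polynomial.eval_add, Polynomial.eval_mul] using this
  have hsq : (2 * φ pA * z + φ pB) ^ 2 = φ (pB ^ 2 - 4 * (pA * pC)) := by
    simp only [map_sub, map_mul, map_pow, map_ofNat]
    linear_combination (4 * φ pA) * heval
  have hint : IsIntegral Rr (2 * φ pA * z + φ pB) := by
    refine ⟨Polynomial.X ^ 2 - Polynomial.C (pB ^ 2 - 4 * (pA * pC)),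
      Polynomial.monic_X_pow_sub_C _ (by norm_num), ?_⟩
    simp only [Polynomial.eval₂_sub, Polynomial.eval₂_pow, Polynomial.eval₂_X,
      Polynomial.eval₂_C]
    rw [← hφ, ← hsq]
    ring
  obtain ⟨r, hrr⟩ := IsIntegrallyClosed.isIntegral_iff.mp hint
  have hr2 : r ^ 2 = pB ^ 2 - 4 * (pA * pC) := by
    apply hinj
    rw [map_pow, hrr, hsq]
  have key : r ^ 2 = X 0 * (-(16 * (X 1 * X 2 * X 3 * gG))) := by
    rw [hr2, keyring]; ring
  have hX0 : Prime (X 0 : Rr) := primeX4 0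
  have hdr : (X 0 : Rr) ∣ r := hX0.dvd_of_dvd_pow (n := 2) ⟨_, key⟩
  obtain ⟨t, rfl⟩ := hdr
  have hcancel : (X 0 : Rr) * t ^ 2 = -(16 * (X 1 * X 2 * X 3 * gG)) :=
    mul_left_cancel₀ hX0.ne_zero (by linear_combination key)
  have hdvd16 : (X 0 : Rr) ∣ 16 * (X 1 * X 2 * X 3 * gG) := by
    rw [← dvd_neg]
    exact ⟨t ^ 2, hcancel.symm⟩
  have hdvd : (X 0 : Rr) ∣ X 1 * X 2 * X 3 * gG := by
    have hu16 : IsUnit (16 : Rr) := by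
      rw [← map_ofNat (C : ℂ →+* Rr) 16]
      exact (isUnit_iff_ne_zero.mpr (by norm_num)).map C
    exact (hu16.dvd_mul_left).mp hdvd16
  rcases hX0.2.2 _ _ hdvd with h | h
  · rcases hX0.2.2 _ _ h with h' | h'
    · rcases hX0.2.2 _ _ h' with h'' | h''
      · exact notX0dvd _ (by tauto) h''
      · exact notX0dvd _ (by tauto) h''
    · exact notX0dvd _ (by tauto) h'
  · exact notX0dvd _ (by tauto) h

/-- The logarithmic discriminant polynomial of `M_{0,5}` is homogeneous of degree 4
and irreducible over `ℂ`. -/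
theorem stmt_19 :
    (let q : MvPolynomial (Fin 5) ℂ :=
      (X 0 * X 3 + X 0 * X 4 + X 1 * X 4 + X 1 * X 2 + X 2 * X 4 + X 3 * X 4
        + X 4 ^ 2) ^ 2 - 4 * (X 0 * X 1 * X 2 * X 3);
    q.IsHomogeneous 4 ∧ Irreducible q) := by
  refine ⟨?_, ?_⟩
  · -- homogeneous of degree 4
    have hX2 : ∀ i j : Fin 5, ((X i * X j : MvPolynomial (Fin 5) ℂ)).IsHomogeneous 2 :=
      fun i j => (isHomogeneous_X ℂ i).mul (isHomogeneous_X ℂ j)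
    have hsum : ((X 0 * X 3 + X 0 * X 4 + X 1 * X 4 + X 1 * X 2 + X 2 * X 4 + X 3 * X 4
        + X 4 ^ 2 : MvPolynomial (Fin 5) ℂ)).IsHomogeneous 2 :=
      ((((((hX2 0 3).add (hX2 0 4)).add (hX2 1 4)).add (hX2 1 2)).add (hX2 2 4)).add
        (hX2 3 4)).add (by simpa using (isHomogeneous_X ℂ (4 : Fin 5)).pow 2)
    have h1 : ((X 0 * X 3 + X 0 * X 4 + X 1 * X 4 + X 1 * X 2 + X 2 * X 4 + X 3 * X 4
        + X 4 ^ 2 : MvPolynomial (Fin 5) ℂ) ^ 2).IsHomogeneous 4 := by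
      simpa using hsum.pow 2
    have h2 : ((4 : MvPolynomial (Fin 5) ℂ) * (X 0 * X 1 * X 2 * X 3)).IsHomogeneous 4 := by
      have h4 : ((4 : MvPolynomial (Fin 5) ℂ)).IsHomogeneous 0 := by
        rw [← map_ofNat (C : ℂ →+* MvPolynomial (Fin 5) ℂ) 4]
        exact isHomogeneous_C _ _
      simpa using h4.mul ((((isHomogeneous_X ℂ (0 : Fin 5)).mul (isHomogeneous_X ℂ 1)).mul
        (isHomogeneous_X ℂ 2)).mul (isHomogeneous_X ℂ 3))
    exact h1.sub h2
  · -- irreducible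
    apply Irreducible.of_map (f := (finSuccEquiv ℂ 4).toMulEquiv)
    show Irreducible ((finSuccEquiv ℂ 4)
      ((X 0 * X 3 + X 0 * X 4 + X 1 * X 4 + X 1 * X 2 + X 2 * X 4 + X 3 * X 4
        + X 4 ^ 2) ^ 2 - 4 * (X 0 * X 1 * X 2 * X 3) : MvPolynomial (Fin 5) ℂ))
    rw [hq]
    letI : NormalizationMonoid Rr :=
      (UniqueFactorizationMonoid.normalizationMonoid (α := Rr)).toNormalizationMonoid
    letI := UniqueFactorizationMonoid.toNormalizedGCDMonoid Rr
    rw [hprim.irreducible_iff_irreducible_map_fraction_map (K := FractionRing Rr)]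
    exact irred_map _
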